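/- A partial matrix with nonnegative observed entries has a completion to a rank-1 matrix with all entries nonnegative if and only if it has a completion to a rank-1 real matrix (not necessarily nonnegative). -/

import Mathlib

open Matrix

lemma rank_le_one_decomp {p q : ℕ} (M : Matrix (Fin p) (Fin q) ℝ) (h : M.rank ≤ 1) :
    ∃ (a : Fin p → ℝ) (b : Fin q → ℝ), ∀ i j, M i j = a i * b j := by
  have h' : Module.finrank ℝ (LinearMap.range M.mulVecLin) ≤ 1 := h
  rw [Submodule.finrank_le_one_iff_isPrincipal] at h'
  obtain ⟨v, hv⟩ := h'
  refine ⟨v, fun j => ?_, ?_⟩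
  · classical
    have hcol : M.mulVec (Pi.single j 1) ∈ LinearMap.range M.mulVecLin :=
      ⟨Pi.single j 1, rfl⟩
    rw [hv, Submodule.mem_span_singleton] at hcol
    exact hcol.choose
  · intro i j
    classical
    have hcol : M.mulVec (Pi.single j 1) ∈ LinearMap.range M.mulVecLin :=
      ⟨Pi.single j 1, rfl⟩
    rw [hv, Submodule.mem_span_singleton] at hcol
    have := congrFun hcol.choose_spec i
    simp only [Pi.smul_apply, smul_eq_mul] at this
    have hM : M.mulVec (Pi.single j 1) i = M i j := by
      simp [mulVec, dotProduct, Pi.single_apply, mul_ite]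
    rw [hM] at this
    rw [← this]; ring

lemma rank_vecMulVec_le_one {p q : ℕ} (a : Fin p → ℝ) (b : Fin q → ℝ) :
    (vecMulVec a b).rank ≤ 1 := by
  rw [vecMulVec_eq Unit]
  calc (replicateCol Unit a * replicateRow Unit b).rank ≤ (replicateRow Unit b).rank := rank_mul_le_right _ _
    _ ≤ Fintype.card Unit := rank_le_card_height _
    _ = 1 := by simp

theorem stmt2 {p q : ℕ} (E : Set (Fin p × Fin q)) (f : Fin p → Fin q → ℝ)
    (hf : ∀ e ∈ E, 0 ≤ f e.1 e.2) :
    (∃ M : Matrix (Fin p) (Fin q) ℝ, M.rank ≤ 1 ∧ (∀ i j, 0 ≤ M i j) ∧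
        ∀ e ∈ E, M e.1 e.2 = f e.1 e.2) ↔
    (∃ M : Matrix (Fin p) (Fin q) ℝ, M.rank ≤ 1 ∧ ∀ e ∈ E, M e.1 e.2 = f e.1 e.2) := by
  constructor
  · rintro ⟨M, h1, _, h3⟩
    exact ⟨M, h1, h3⟩
  · rintro ⟨M, h1, h2⟩
    obtain ⟨a, b, hab⟩ := rank_le_one_decomp M h1
    refine ⟨vecMulVec (fun i => |a i|) (fun j => |b j|), rank_vecMulVec_le_one _ _,
      fun i j => by simp [vecMulVec_apply]; positivity, fun e he => ?_⟩
    have := h2 e he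
    rw [vecMulVec_apply, ← abs_mul, ← hab, this]
    exact abs_of_nonneg (hf e he)
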